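/- Let X1,...,Xn be independent real-valued random variables under a probability measure P with distribution functions F1,...,Fn, and let U be uniform on [0,1] under P. Then max_i F_i^{-1}(U) is first-order stochastically dominated by max_i X_i; consequently ES_p^P(max_i F_i^{-1}(U)) ≤ ES_p^P(max_i X_i) for every p ∈ (0,1). This shows iMES_p^Q ≤ rMES_p^Q. -/

import Mathlib

open MeasureTheory Set ProbabilityTheory

noncomputable def VaR {Ω : Type*} [MeasurableSpace Ω] (Q : Measure Ω) (X : Ω → ℝ) (p : ℝ) : ℝ :=
  sInf {x : ℝ | p ≤ (Q {ω | X ω ≤ x}).toReal}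

noncomputable def ES {Ω : Type*} [MeasurableSpace Ω] (Q : Measure Ω) (X : Ω → ℝ) (p : ℝ) : ℝ :=
  (1 - p)⁻¹ * ∫ q in p..1, VaR Q X q

/-- Generalized inverse of a cdf. -/
noncomputable def invCdf (F : ℝ → ℝ) (t : ℝ) : ℝ := sInf {x : ℝ | t ≤ F x}

section Aux

variable {Ω : Type*} [MeasurableSpace Ω] (P : Measure Ω) [IsProbabilityMeasure P]

lemma aux_mem_var_set (W : Ω → ℝ) (C : ℝ) (hW : ∀ ω, |W ω| ≤ C) {q : ℝ} (hq : q ≤ 1) :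
    C ∈ {x : ℝ | q ≤ (P {ω | W ω ≤ x}).toReal} := by
  have h : {ω | W ω ≤ C} = Set.univ := by
    ext ω; simp [(abs_le.mp (hW ω)).2]
  simp [Set.mem_setOf_eq, h, hq]

lemma aux_var_set_subset (W : Ω → ℝ) (C : ℝ) (hW : ∀ ω, |W ω| ≤ C) {q : ℝ} (hq : 0 < q) :
    {x : ℝ | q ≤ (P {ω | W ω ≤ x}).toReal} ⊆ Set.Ici (-C) := by
  intro x hx
  by_contra h
  rw [Set.mem_Ici, not_le] at h
  have hempty : {ω | W ω ≤ x} = (∅ : Set Ω) := by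
    ext ω
    simp only [Set.mem_setOf_eq, Set.mem_empty_iff_false, iff_false, not_le]
    have := (abs_le.mp (hW ω)).1
    linarith
  rw [Set.mem_setOf_eq, hempty] at hx
  simp at hx
  linarith

lemma aux_var_mono_on (W : Ω → ℝ) (C : ℝ) (hW : ∀ ω, |W ω| ≤ C) {p : ℝ}
    (hp : 0 < p) : MonotoneOn (fun q => VaR P W q) (Set.Icc p 1) := by
  intro q1 hq1 q2 hq2 h12
  unfold VaR
  apply csInf_le_csInf
  · exact ⟨-C, aux_var_set_subset P W C hW (lt_of_lt_of_le hp hq1.1)⟩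
  · exact ⟨C, aux_mem_var_set P W C hW hq2.2⟩
  · intro x hx
    exact le_trans h12 hx

lemma aux_var_le (Y Z : Ω → ℝ) (C : ℝ) (hY : ∀ ω, |Y ω| ≤ C) (hZ : ∀ ω, |Z ω| ≤ C)
    (hdom : ∀ x, P {ω | Z ω ≤ x} ≤ P {ω | Y ω ≤ x}) {q : ℝ} (hq0 : 0 < q) (hq1 : q ≤ 1) :
    VaR P Y q ≤ VaR P Z q := by
  unfold VaR
  apply csInf_le_csInf
  · exact ⟨-C, aux_var_set_subset P Y C hY hq0⟩
  · exact ⟨C, aux_mem_var_set P Z C hZ hq1⟩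
  · intro x hx
    refine le_trans hx (ENNReal.toReal_mono (measure_ne_top P _) (hdom x))

lemma aux_es_mono (Y Z : Ω → ℝ) (C : ℝ) (hY : ∀ ω, |Y ω| ≤ C) (hZ : ∀ ω, |Z ω| ≤ C)
    (hdom : ∀ x, P {ω | Z ω ≤ x} ≤ P {ω | Y ω ≤ x})
    (p : ℝ) (hp : p ∈ Set.Ioo (0 : ℝ) 1) : ES P Y p ≤ ES P Z p := by
  obtain ⟨hp0, hp1⟩ := hp
  have hple1 : p ≤ 1 := hp1.le
  have huIcc : Set.uIcc p 1 = Set.Icc p 1 := Set.uIcc_of_le hple1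
  have hintY : IntervalIntegrable (fun q => VaR P Y q) volume p 1 := by
    apply MonotoneOn.intervalIntegrable
    rw [huIcc]; exact aux_var_mono_on P Y C hY hp0
  have hintZ : IntervalIntegrable (fun q => VaR P Z q) volume p 1 := by
    apply MonotoneOn.intervalIntegrable
    rw [huIcc]; exact aux_var_mono_on P Z C hZ hp0
  have hint : (∫ q in p..1, VaR P Y q) ≤ ∫ q in p..1, VaR P Z q := by
    apply intervalIntegral.integral_mono_on hple1 hintY hintZ
    intro q hq
    exact aux_var_le P Y Z C hY hZ hdom (lt_of_lt_of_le hp0 hq.1) hq.2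
  unfold ES
  apply mul_le_mul_of_nonneg_left hint
  exact inv_nonneg.mpr (by linarith)

end Aux

theorem imes_le_rmes {Ω : Type*} [MeasurableSpace Ω]
    (P : Measure Ω) [IsProbabilityMeasure P]
    (n : ℕ) (hn : 0 < n) (X : Fin n → Ω → ℝ)
    (hXm : ∀ i, Measurable (X i)) (hXb : ∀ i, ∃ M, ∀ ω, |X i ω| ≤ M)
    (hindep : iIndepFun X P)
    (F : Fin n → ℝ → ℝ) (hF : ∀ i x, F i x = (P {ω | X i ω ≤ x}).toReal)
    (U : Ω → ℝ) (hU : Measurable U)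
    (hUnif : ∀ t ∈ Set.Icc (0 : ℝ) 1, P {ω | U ω ≤ t} = ENNReal.ofReal t) :
    (∀ x : ℝ, P {ω | (⨆ i, X i ω) ≤ x} ≤ P {ω | (⨆ i, invCdf (F i) (U ω)) ≤ x}) ∧
    (∀ p ∈ Set.Ioo (0 : ℝ) 1,
      ES P (fun ω => ⨆ i, invCdf (F i) (U ω)) p ≤ ES P (fun ω => ⨆ i, X i ω) p) := by
  haveI : Nonempty (Fin n) := ⟨⟨0, hn⟩⟩
  choose M hM using hXb
  set C : ℝ := max (Finset.univ.sup' (Finset.univ_nonempty) M) 0 with hCdef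
  have hC0 : (0 : ℝ) ≤ C := le_max_right _ _
  have hMC : ∀ i, M i ≤ C :=
    fun i => le_max_of_le_left (Finset.le_sup' M (Finset.mem_univ i))
  have hXC : ∀ i ω, |X i ω| ≤ C := fun i ω => le_trans (hM i ω) (hMC i)
  -- cdf facts
  have hF0 : ∀ i, ∀ y < -C, F i y = 0 := by
    intro i y hy
    have : {ω | X i ω ≤ y} = (∅ : Set Ω) := by
      ext ω
      simp only [Set.mem_setOf_eq, Set.mem_empty_iff_false, iff_false, not_le]
      have := (abs_le.mp (hXC i ω)).1
      linarith
    rw [hF, this]; simp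
  have hF1 : ∀ i, ∀ y, C ≤ y → F i y = 1 := by
    intro i y hy
    have : {ω | X i ω ≤ y} = Set.univ := by
      ext ω
      have := (abs_le.mp (hXC i ω)).2
      simp only [Set.mem_setOf_eq, Set.mem_univ, iff_true]
      linarith
    rw [hF, this]; simp
  have hFnn : ∀ i y, 0 ≤ F i y := fun i y => by rw [hF]; exact ENNReal.toReal_nonneg
  have hFle1 : ∀ i y, F i y ≤ 1 := by
    intro i y
    rw [hF]
    exact ENNReal.toReal_le_of_le_ofReal zero_le_one (by simpa using prob_le_one)
  -- bounds on invCdf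
  have hinvC : ∀ i t, |invCdf (F i) t| ≤ C := by
    intro i t
    unfold invCdf
    rcases le_or_gt t 0 with ht | ht
    · have : {x : ℝ | t ≤ F i x} = Set.univ := by
        ext x; simp only [Set.mem_setOf_eq, Set.mem_univ, iff_true]
        exact le_trans ht (hFnn i x)
      rw [this, Real.sInf_of_not_bddBelow (by simpa using not_bddBelow_univ)]
      simpa using hC0
    rcases le_or_gt t 1 with ht1 | ht1
    · have hmem : C ∈ {x : ℝ | t ≤ F i x} := by
        simp only [Set.mem_setOf_eq]
        rw [hF1 i C le_rfl]; exact ht1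
      have hsub : {x : ℝ | t ≤ F i x} ⊆ Set.Ici (-C) := by
        intro y hy
        by_contra hcon
        rw [Set.mem_Ici, not_le] at hcon
        rw [Set.mem_setOf_eq, hF0 i y hcon] at hy
        linarith
      rw [abs_le]
      constructor
      · exact le_csInf ⟨C, hmem⟩ fun y hy => hsub hy
      · exact csInf_le ⟨-C, hsub⟩ hmem
    · have : {x : ℝ | t ≤ F i x} = (∅ : Set ℝ) := by
        ext x
        simp only [Set.mem_setOf_eq, Set.mem_empty_iff_false, iff_false, not_le]
        exact lt_of_le_of_lt (hFle1 i x) ht1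
      rw [this, Real.sInf_empty]
      simpa using hC0
  -- bounds on the suprema
  have hbddX : ∀ ω, BddAbove (Set.range fun i => X i ω) :=
    fun ω => (Set.finite_range _).bddAbove
  have hbddI : ∀ ω, BddAbove (Set.range fun i => invCdf (F i) (U ω)) :=
    fun ω => (Set.finite_range _).bddAbove
  have hZC : ∀ ω, |⨆ i, X i ω| ≤ C := by
    intro ω
    rw [abs_le]
    constructor
    · exact le_trans (abs_le.mp (hXC ⟨0, hn⟩ ω)).1 (le_ciSup (hbddX ω) ⟨0, hn⟩)
    · exact ciSup_le fun i => (abs_le.mp (hXC i ω)).2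
  have hYC : ∀ ω, |⨆ i, invCdf (F i) (U ω)| ≤ C := by
    intro ω
    rw [abs_le]
    constructor
    · exact le_trans (abs_le.mp (hinvC ⟨0, hn⟩ (U ω))).1 (le_ciSup (hbddI ω) ⟨0, hn⟩)
    · exact ciSup_le fun i => (abs_le.mp (hinvC i (U ω))).2
  -- first order stochastic dominance
  have hdom : ∀ x : ℝ,
      P {ω | (⨆ i, X i ω) ≤ x} ≤ P {ω | (⨆ i, invCdf (F i) (U ω)) ≤ x} := by
    intro x
    have hsetZ : {ω | (⨆ i, X i ω) ≤ x} = ⋂ i, {ω | X i ω ≤ x} := by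
      ext ω
      simp only [Set.mem_setOf_eq, Set.mem_iInter]
      exact ciSup_le_iff (hbddX ω)
    obtain ⟨j, -, hj⟩ := Finset.exists_min_image Finset.univ (fun i => F i x)
      ⟨⟨0, hn⟩, Finset.mem_univ _⟩
    have hprod : P (⋂ i, {ω | X i ω ≤ x}) = ∏ i, P {ω | X i ω ≤ x} := by
      refine hindep.meas_iInter fun i => ⟨Set.Iic x, measurableSet_Iic, rfl⟩
    have hle_j : (∏ i, P {ω | X i ω ≤ x}) ≤ P {ω | X j ω ≤ x} := by
      rw [← Finset.mul_prod_erase Finset.univ _ (Finset.mem_univ j)]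
      exact mul_le_of_le_one_right' (Finset.prod_le_one' fun i _ => prob_le_one)
    have hFjx : F j x ∈ Set.Icc (0 : ℝ) 1 := ⟨hFnn j x, hFle1 j x⟩
    have hPj : P {ω | X j ω ≤ x} = P {ω | U ω ≤ F j x} := by
      rw [hUnif _ hFjx, hF]
      rw [ENNReal.ofReal_toReal (measure_ne_top P _)]
    have hU0 : P {ω | U ω ≤ (0 : ℝ)} = 0 := by
      simpa using hUnif 0 ⟨le_rfl, zero_le_one⟩
    have hincl : {ω | 0 < U ω ∧ U ω ≤ F j x} ⊆ {ω | (⨆ i, invCdf (F i) (U ω)) ≤ x} := by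
      intro ω hω
      obtain ⟨hU0', hUF⟩ := hω
      simp only [Set.mem_setOf_eq]
      apply ciSup_le
      intro i
      unfold invCdf
      have hmem : x ∈ {y : ℝ | U ω ≤ F i y} := le_trans hUF (hj i (Finset.mem_univ i))
      have hsub : {y : ℝ | U ω ≤ F i y} ⊆ Set.Ici (-C) := by
        intro y hy
        by_contra hcon
        rw [Set.mem_Ici, not_le] at hcon
        rw [Set.mem_setOf_eq, hF0 i y hcon] at hy
        linarith
      exact csInf_le ⟨-C, hsub⟩ hmem
    have hsplit : {ω | U ω ≤ F j x} ⊆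
        {ω | U ω ≤ (0 : ℝ)} ∪ {ω | 0 < U ω ∧ U ω ≤ F j x} := by
      intro ω hω
      rcases le_or_gt (U ω) 0 with h | h
      · exact Or.inl h
      · exact Or.inr ⟨h, hω⟩
    calc P {ω | (⨆ i, X i ω) ≤ x} = ∏ i, P {ω | X i ω ≤ x} := by rw [hsetZ, hprod]
      _ ≤ P {ω | X j ω ≤ x} := hle_j
      _ = P {ω | U ω ≤ F j x} := hPj
      _ ≤ P {ω | U ω ≤ (0 : ℝ)} + P {ω | 0 < U ω ∧ U ω ≤ F j x} :=
          le_trans (measure_mono hsplit) (measure_union_le _ _)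
      _ = P {ω | 0 < U ω ∧ U ω ≤ F j x} := by rw [hU0, zero_add]
      _ ≤ P {ω | (⨆ i, invCdf (F i) (U ω)) ≤ x} := measure_mono hincl
  refine ⟨hdom, fun p hp => ?_⟩
  exact aux_es_mono P _ _ C hYC hZC hdom p hp
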